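/- arXiv:1111.6233 — 2 statements merged into one kernel-verified Lean document; each statement's English description precedes it below -/
import Mathlib

section
/- Let Z be a centered second-order random process indexed by ℝ² with covariance kernel K(x,y) = K₁(x₁,y₁) + K₂(x₂,y₂). Define Z_T(x₁,x₂) = Z(x₁,0) + Z(0,x₂) − Z(0,0). Then for every x ∈ ℝ², Var[Z(x) − Z_T(x)] = 0, hence P(Z(x) = Z_T(x)) = 1; i.e., Z admits a modification whose paths are additive functions. -/
open MeasureTheory

lemma memL2_integrable_mul {Ω : Type*} [MeasurableSpace Ω] {μ : Measure Ω}
    {f g : Ω → ℝ} (hf : MemLp f 2 μ) (hg : MemLp g 2 μ) :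
    Integrable (fun ω => f ω * g ω) μ := by
  have h : (fun ω => f ω * g ω)
      = fun ω => ((f ω + g ω) ^ 2 - f ω ^ 2 - g ω ^ 2) / 2 := by
    funext ω; ring
  rw [h]
  exact (((hf.add hg).integrable_sq.sub hf.integrable_sq).sub hg.integrable_sq).div_const 2

/-- A centered second-order process `Z` on `ℝ²` with additive covariance kernel
`K(x,y) = K₁(x₁,y₁) + K₂(x₂,y₂)` satisfies `Var[Z(x) − Z_T(x)] = 0` for
`Z_T(x₁,x₂) = Z(x₁,0) + Z(0,x₂) − Z(0,0)`, hence `P(Z(x) = Z_T(x)) = 1`: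
`Z` admits a modification with additive paths. -/
theorem additive_kernel_implies_additive_modification
    {Ω : Type*} [MeasurableSpace Ω] (μ : Measure Ω) [IsProbabilityMeasure μ]
    (Z : ℝ × ℝ → Ω → ℝ) (K1 K2 : ℝ → ℝ → ℝ)
    (hL2 : ∀ x, MemLp (Z x) 2 μ)
    (hcent : ∀ x, ∫ ω, Z x ω ∂μ = 0)
    (hcov : ∀ x y : ℝ × ℝ, ∫ ω, Z x ω * Z y ω ∂μ = K1 x.1 y.1 + K2 x.2 y.2) :
    ∀ x : ℝ × ℝ,
      (∫ ω, (Z x ω - (Z (x.1, 0) ω + Z (0, x.2) ω - Z (0, 0) ω)) ^ 2 ∂μ = 0) ∧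
      (∀ᵐ ω ∂μ, Z x ω = Z (x.1, 0) ω + Z (0, x.2) ω - Z (0, 0) ω) := by
  intro x
  obtain ⟨x1, x2⟩ := x
  set a : ℝ × ℝ := (x1, x2) with ha
  set b : ℝ × ℝ := (x1, 0) with hb
  set c : ℝ × ℝ := (0, x2) with hc
  set d : ℝ × ℝ := ((0 : ℝ), (0 : ℝ)) with hd
  have hInt : ∀ u v : ℝ × ℝ, Integrable (fun ω => Z u ω * Z v ω) μ :=
    fun u v => memL2_integrable_mul (hL2 u) (hL2 v)
  -- symmetry of K2
  have hK2sym : K2 x2 0 = K2 0 x2 := by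
    have h1 := hcov ((0 : ℝ), x2) ((0 : ℝ), (0 : ℝ))
    have h2 := hcov ((0 : ℝ), (0 : ℝ)) ((0 : ℝ), x2)
    have hcomm : ∫ ω, Z ((0 : ℝ), x2) ω * Z ((0 : ℝ), (0 : ℝ)) ω ∂μ
        = ∫ ω, Z ((0 : ℝ), (0 : ℝ)) ω * Z ((0 : ℝ), x2) ω ∂μ := by
      apply integral_congr_ae; filter_upwards with ω; ring
    simp only at h1 h2
    linarith [h1, h2, hcomm ▸ h1]
  have key : ∫ ω, (Z a ω - (Z b ω + Z c ω - Z d ω)) ^ 2 ∂μ = 0 := by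
    have hexp : (fun ω => (Z a ω - (Z b ω + Z c ω - Z d ω)) ^ 2)
        = fun ω =>
          (Z a ω * Z a ω + Z b ω * Z b ω + Z c ω * Z c ω + Z d ω * Z d ω
            + 2 * (Z a ω * Z d ω) + 2 * (Z b ω * Z c ω))
          - (2 * (Z a ω * Z b ω) + 2 * (Z a ω * Z c ω)
            + 2 * (Z b ω * Z d ω) + 2 * (Z c ω * Z d ω)) := by
      funext ω; ring
    have I1 := hInt a a; have I2 := hInt b b; have I3 := hInt c c
    have I4 := hInt d d; have I5 := (hInt a d).const_mul 2
    have I6 := (hInt b c).const_mul 2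
    have I7 := (hInt a b).const_mul 2; have I8 := (hInt a c).const_mul 2
    have I9 := (hInt b d).const_mul 2; have I10 := (hInt c d).const_mul 2
    have hsub : ∫ ω, (Z a ω - (Z b ω + Z c ω - Z d ω)) ^ 2 ∂μ
        = (∫ ω, (Z a ω * Z a ω + Z b ω * Z b ω + Z c ω * Z c ω + Z d ω * Z d ω
            + 2 * (Z a ω * Z d ω) + 2 * (Z b ω * Z c ω)) ∂μ)
          - ∫ ω, (2 * (Z a ω * Z b ω) + 2 * (Z a ω * Z c ω)
            + 2 * (Z b ω * Z d ω) + 2 * (Z c ω * Z d ω)) ∂μ := by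
      rw [hexp]
      exact integral_sub ((((((I1.add I2).add I3).add I4).add I5).add I6))
        (((I7.add I8).add I9).add I10)
    have hpos : ∫ ω, (Z a ω * Z a ω + Z b ω * Z b ω + Z c ω * Z c ω + Z d ω * Z d ω
            + 2 * (Z a ω * Z d ω) + 2 * (Z b ω * Z c ω)) ∂μ
        = (∫ ω, Z a ω * Z a ω ∂μ) + (∫ ω, Z b ω * Z b ω ∂μ) + (∫ ω, Z c ω * Z c ω ∂μ)
          + (∫ ω, Z d ω * Z d ω ∂μ) + 2 * (∫ ω, Z a ω * Z d ω ∂μ)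
          + 2 * (∫ ω, Z b ω * Z c ω ∂μ) := by
      have h1 : ∫ ω, (Z a ω * Z a ω + Z b ω * Z b ω) ∂μ
          = (∫ ω, Z a ω * Z a ω ∂μ) + ∫ ω, Z b ω * Z b ω ∂μ := integral_add I1 I2
      have h2 : ∫ ω, (Z a ω * Z a ω + Z b ω * Z b ω + Z c ω * Z c ω) ∂μ
          = (∫ ω, (Z a ω * Z a ω + Z b ω * Z b ω) ∂μ) + ∫ ω, Z c ω * Z c ω ∂μ :=
        integral_add (I1.add I2) I3
      have h3 : ∫ ω, (Z a ω * Z a ω + Z b ω * Z b ω + Z c ω * Z c ω + Z d ω * Z d ω) ∂μ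
          = (∫ ω, (Z a ω * Z a ω + Z b ω * Z b ω + Z c ω * Z c ω) ∂μ)
            + ∫ ω, Z d ω * Z d ω ∂μ := integral_add ((I1.add I2).add I3) I4
      have h4 : ∫ ω, (Z a ω * Z a ω + Z b ω * Z b ω + Z c ω * Z c ω + Z d ω * Z d ω
              + 2 * (Z a ω * Z d ω)) ∂μ
          = (∫ ω, (Z a ω * Z a ω + Z b ω * Z b ω + Z c ω * Z c ω + Z d ω * Z d ω) ∂μ)
            + ∫ ω, 2 * (Z a ω * Z d ω) ∂μ := integral_add (((I1.add I2).add I3).add I4) I5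
      have h5 : ∫ ω, (Z a ω * Z a ω + Z b ω * Z b ω + Z c ω * Z c ω + Z d ω * Z d ω
              + 2 * (Z a ω * Z d ω) + 2 * (Z b ω * Z c ω)) ∂μ
          = (∫ ω, (Z a ω * Z a ω + Z b ω * Z b ω + Z c ω * Z c ω + Z d ω * Z d ω
              + 2 * (Z a ω * Z d ω)) ∂μ)
            + ∫ ω, 2 * (Z b ω * Z c ω) ∂μ :=
        integral_add ((((I1.add I2).add I3).add I4).add I5) I6
      have c1 : ∫ ω, 2 * (Z a ω * Z d ω) ∂μ = 2 * ∫ ω, Z a ω * Z d ω ∂μ :=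
        integral_const_mul 2 _
      have c2 : ∫ ω, 2 * (Z b ω * Z c ω) ∂μ = 2 * ∫ ω, Z b ω * Z c ω ∂μ :=
        integral_const_mul 2 _
      rw [h5, h4, h3, h2, h1, c1, c2]
    have hneg : ∫ ω, (2 * (Z a ω * Z b ω) + 2 * (Z a ω * Z c ω)
            + 2 * (Z b ω * Z d ω) + 2 * (Z c ω * Z d ω)) ∂μ
        = 2 * (∫ ω, Z a ω * Z b ω ∂μ) + 2 * (∫ ω, Z a ω * Z c ω ∂μ)
          + 2 * (∫ ω, Z b ω * Z d ω ∂μ) + 2 * (∫ ω, Z c ω * Z d ω ∂μ) := by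
      have h1 : ∫ ω, (2 * (Z a ω * Z b ω) + 2 * (Z a ω * Z c ω)) ∂μ
          = (∫ ω, 2 * (Z a ω * Z b ω) ∂μ) + ∫ ω, 2 * (Z a ω * Z c ω) ∂μ :=
        integral_add I7 I8
      have h2 : ∫ ω, (2 * (Z a ω * Z b ω) + 2 * (Z a ω * Z c ω) + 2 * (Z b ω * Z d ω)) ∂μ
          = (∫ ω, (2 * (Z a ω * Z b ω) + 2 * (Z a ω * Z c ω)) ∂μ)
            + ∫ ω, 2 * (Z b ω * Z d ω) ∂μ := integral_add (I7.add I8) I9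
      have h3 : ∫ ω, (2 * (Z a ω * Z b ω) + 2 * (Z a ω * Z c ω) + 2 * (Z b ω * Z d ω)
              + 2 * (Z c ω * Z d ω)) ∂μ
          = (∫ ω, (2 * (Z a ω * Z b ω) + 2 * (Z a ω * Z c ω) + 2 * (Z b ω * Z d ω)) ∂μ)
            + ∫ ω, 2 * (Z c ω * Z d ω) ∂μ := integral_add ((I7.add I8).add I9) I10
      rw [h3, h2, h1, integral_const_mul, integral_const_mul, integral_const_mul,
        integral_const_mul]
    rw [hsub, hpos, hneg, hcov a a, hcov b b, hcov c c, hcov d d, hcov a d, hcov b c,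
      hcov a b, hcov a c, hcov b d, hcov c d]
    simp only [ha, hb, hc, hd]
    rw [hK2sym]; ring
  refine ⟨key, ?_⟩
  have hf : MemLp (fun ω => Z a ω - (Z b ω + Z c ω - Z d ω)) 2 μ :=
    (hL2 a).sub (((hL2 b).add (hL2 c)).sub (hL2 d))
  have hsq : Integrable (fun ω => (Z a ω - (Z b ω + Z c ω - Z d ω)) ^ 2) μ :=
    hf.integrable_sq
  have hzero : ∀ᵐ ω ∂μ, (Z a ω - (Z b ω + Z c ω - Z d ω)) ^ 2 = 0 := by
    have := (integral_eq_zero_iff_of_nonneg (fun ω => sq_nonneg _) hsq).mp key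
    filter_upwards [this] with ω hω using hω
  filter_upwards [hzero] with ω hω
  have := pow_eq_zero_iff (n := 2) (by norm_num) |>.mp hω
  linarith
end

section
/- Let K(x,y) = K₁(x₁,y₁) + K₂(x₂,y₂) be an additive kernel on ℝ², let X = {x⁽¹⁾=(a,c), x⁽²⁾=(b,c), x⁽³⁾=(a,d)} be a design with invertible Gram matrix 𝐊, and let x⁽⁴⁾=(b,d). Then the simple Kriging prediction variance v(x⁽⁴⁾) = K(x⁽⁴⁾,x⁽⁴⁾) − k(x⁽⁴⁾)ᵀ 𝐊⁻¹ k(x⁽⁴⁾) equals 0, even though x⁽⁴⁾ ∉ X. -/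
set_option maxRecDepth 4000


open Matrix

/-- For an additive kernel `K(x,y) = K₁(x₁,y₁) + K₂(x₂,y₂)` on `ℝ²`, design
`X = {(a,c), (b,c), (a,d)}` with invertible Gram matrix `𝐊`, and `x⁽⁴⁾ = (b,d)`,
the simple Kriging prediction variance
`v(x⁽⁴⁾) = K(x⁽⁴⁾,x⁽⁴⁾) − k(x⁽⁴⁾)ᵀ 𝐊⁻¹ k(x⁽⁴⁾)` is zero, although `x⁽⁴⁾ ∉ X`. -/
theorem additive_kriging_zero_variance_off_design
    (K1 K2 : ℝ → ℝ → ℝ)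
    (h1sym : ∀ s t, K1 s t = K1 t s) (h2sym : ∀ s t, K2 s t = K2 t s)
    (a b c d : ℝ)
    (X : Fin 3 → ℝ × ℝ) (hX : X = ![(a, c), (b, c), (a, d)])
    (K : ℝ × ℝ → ℝ × ℝ → ℝ) (hK : ∀ x y, K x y = K1 x.1 y.1 + K2 x.2 y.2)
    (Kmat : Matrix (Fin 3) (Fin 3) ℝ) (hKmat : Kmat = Matrix.of fun i j => K (X i) (X j))
    (hinv : IsUnit Kmat.det) :
    K (b, d) (b, d) - (fun i => K (b, d) (X i)) ⬝ᵥ (Kmat⁻¹ *ᵥ fun i => K (b, d) (X i)) = 0 := by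
  have hv : (fun i => K (b, d) (X i)) = Kmat *ᵥ ![(-1 : ℝ), 1, 1] := by
    subst hX
    subst hKmat
    funext i
    fin_cases i <;>
      simp [Matrix.mulVec, dotProduct, hK, Fin.sum_univ_three]
    · linear_combination h1sym b a + h2sym d c
    · linear_combination h2sym d c
    · linear_combination h1sym b a
  rw [hv, Matrix.mulVec_mulVec, Matrix.nonsing_inv_mul _ hinv, Matrix.one_mulVec]
  subst hX
  subst hKmat
  simp [Matrix.mulVec, dotProduct, hK, Fin.sum_univ_three,
    h1sym a b, h2sym c d]
  ring
end
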